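/- Let a > 0 and b > 0 be real numbers. For every x > 0, the function F(x) = (√π/(4a)) [ e^{2ab} · erf(a x + b/x) + e^{−2ab} · erf(a x − b/x) ] is differentiable at x with derivative F′(x) = e^{−a²x² − b²/x²}. -/

import Mathlib

open Real

/-- The error function. -/
noncomputable def erf (z : ℝ) : ℝ := (2 / Real.sqrt π) * ∫ t in (0:ℝ)..z, Real.exp (-t ^ 2)

lemma hasDerivAt_erf (z : ℝ) :
    HasDerivAt erf (2 / Real.sqrt π * Real.exp (-z ^ 2)) z := by
  have hc : Continuous fun t : ℝ => Real.exp (-t ^ 2) := by continuity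
  have := (hc.integral_hasStrictDerivAt 0 z).hasDerivAt
  exact (this.const_mul (2 / Real.sqrt π))

theorem hasDerivAt_erf_combination (a b : ℝ) (ha : 0 < a) (hb : 0 < b) (x : ℝ) (hx : 0 < x) :
    HasDerivAt
      (fun x : ℝ => (Real.sqrt π / (4 * a)) *
        (Real.exp (2 * a * b) * erf (a * x + b / x)
          + Real.exp (-(2 * a * b)) * erf (a * x - b / x)))
      (Real.exp (-(a ^ 2 * x ^ 2) - b ^ 2 / x ^ 2)) x := by
  have hx' : x ≠ 0 := ne_of_gt hx
  have hpi : Real.sqrt π ≠ 0 := by positivity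
  have h1 : HasDerivAt (fun x : ℝ => a * x + b / x) (a - b / x ^ 2) x := by
    have := ((hasDerivAt_id x).const_mul a).add ((hasDerivAt_inv hx').const_mul b)
    exact this.congr_deriv (by field_simp; ring)
  have h2 : HasDerivAt (fun x : ℝ => a * x - b / x) (a + b / x ^ 2) x := by
    have := ((hasDerivAt_id x).const_mul a).sub ((hasDerivAt_inv hx').const_mul b)
    exact this.congr_deriv (by field_simp; ring)
  have H1 := ((hasDerivAt_erf (a * x + b / x)).comp x h1).const_mul (Real.exp (2 * a * b))
  have H2 := ((hasDerivAt_erf (a * x - b / x)).comp x h2).const_mul (Real.exp (-(2 * a * b)))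
  have H := (H1.add H2).const_mul (Real.sqrt π / (4 * a))
  refine H.congr_deriv ?_
  have e1 : -(a * x + b / x) ^ 2 = -(a ^ 2 * x ^ 2) - b ^ 2 / x ^ 2 - 2 * a * b := by
    field_simp; ring
  have e2 : -(a * x - b / x) ^ 2 = -(a ^ 2 * x ^ 2) - b ^ 2 / x ^ 2 + 2 * a * b := by
    field_simp; ring
  rw [e1, e2, sub_eq_add_neg (-(a ^ 2 * x ^ 2) - b ^ 2 / x ^ 2), Real.exp_add, Real.exp_add,
    Real.exp_neg]
  have hu : Real.exp (2 * a * b) ≠ 0 := Real.exp_ne_zero _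
  field_simp
  ring
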